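/- arXiv:2205.09168 — 2 statements merged into one kernel-verified Lean document; each statement's English description precedes it below -/
import Mathlib

section
/- If G is acyclic, then F_G equals the convex hull of the signed characteristic vectors of the routes of G: F_G = conv{ x_R : R a route of G }. -/
namespace FP

/-- The three possible types of an edge `(i,j)` with `i < j`. -/
inductive EdgeType : Type
  | forward
  | backward
  | bidirectional
  deriving DecidableEq

/-- An edge is a pair of endpoints `(i,j)` (with the convention `i < j`
for well-formed graphs) together with its type. -/
abbrev GEdge : Type := ℕ × ℕ × EdgeType

/-- A directed multigraph given by a list of edges, together with a
distinguished source and sink vertex. -/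
structure LGraph : Type where
  edges : List GEdge
  src : ℕ
  snk : ℕ

namespace LGraph

/-- The number of edges. -/
def m (G : LGraph) : ℕ := G.edges.length

/-- The smaller endpoint of the `e`-th edge. -/
def tail (G : LGraph) (e : Fin G.m) : ℕ := (G.edges.get e).1

/-- The larger endpoint of the `e`-th edge. -/
def head (G : LGraph) (e : Fin G.m) : ℕ := (G.edges.get e).2.1

/-- The type of the `e`-th edge. -/
def etype (G : LGraph) (e : Fin G.m) : EdgeType := (G.edges.get e).2.2

/-- Wellformedness: the graph has vertex set `{1,…,n}` and each edge `(i,j)`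
satisfies `i < j`. -/
def WF (G : LGraph) (n : ℕ) : Prop := ∀ e ∈ G.edges, 1 ≤ e.1 ∧ e.1 < e.2.1 ∧ e.2.1 ≤ n

/-- The netflow of `x` at the vertex `v`: total flow on edges `(v,k)`, `v < k`,
minus the total flow on edges `(i,v)`, `i < v`. -/
noncomputable def netflow (G : LGraph) (x : Fin G.m → ℝ) (v : ℕ) : ℝ :=
  ∑ e : Fin G.m, ((if G.tail e = v then x e else 0) - (if G.head e = v then x e else 0))

/-- The set of `u`-flows on `G`, where `u = e_src - e_snk`: the netflow is `1` at the
source, `-1` at the sink and `0` elsewhere, flows on forward edges are nonnegative and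
flows on backward edges are nonpositive (bidirectional edges unrestricted).  This is
the flow polytope `F_G ⊆ ℝ^m`. -/
def flowSet (G : LGraph) : Set (Fin G.m → ℝ) :=
  { x | (∀ v : ℕ, G.netflow x v = (if v = G.src then (1 : ℝ) else 0) - (if v = G.snk then 1 else 0))
      ∧ ∀ e : Fin G.m, (G.etype e = .forward → 0 ≤ x e) ∧ (G.etype e = .backward → x e ≤ 0) }

/-- One step of a directed walk: forward edges can be traversed from the smaller to the
larger endpoint, backward edges from the larger to the smaller, bidirectional edges both
ways. -/
def DStep (G : LGraph) (a b : ℕ) : Prop :=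
  ∃ e : Fin G.m, (G.tail e = a ∧ G.head e = b ∧ G.etype e ≠ .backward) ∨
                 (G.head e = a ∧ G.tail e = b ∧ G.etype e ≠ .forward)

/-- `G` is acyclic if it has no directed cycle. -/
def Acyclic (G : LGraph) : Prop := ∀ v : ℕ, ¬ Relation.TransGen G.DStep v v

/-- One step in the underlying undirected graph. -/
def UStep (G : LGraph) (a b : ℕ) : Prop :=
  ∃ e : Fin G.m, (G.tail e = a ∧ G.head e = b) ∨ (G.head e = a ∧ G.tail e = b)

/-- `G` is connected (as an undirected graph on the vertex set `{1,…,n}`). -/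
def Connected (G : LGraph) (n : ℕ) : Prop :=
  ∀ a b : ℕ, 1 ≤ a → a ≤ n → 1 ≤ b → b ≤ n → Relation.ReflTransGen G.UStep a b

/-- The starting vertex of a traversal step `(e, d)`: `d = true` means the edge `e` is
traversed from its smaller to its larger endpoint. -/
def sv (G : LGraph) (s : Fin G.m × Bool) : ℕ := if s.2 then G.tail s.1 else G.head s.1

/-- The ending vertex of a traversal step. -/
def ev (G : LGraph) (s : Fin G.m × Bool) : ℕ := if s.2 then G.head s.1 else G.tail s.1

/-- A route of `G`: a directed path from the source to the sink (not repeating edges),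
traversing each edge in a direction allowed by its type. -/
structure Route (G : LGraph) : Type where
  steps : List (Fin G.m × Bool)
  ne : steps ≠ []
  chain : steps.Chain' (fun s t => G.ev s = G.sv t)
  first : G.sv (steps.head ne) = G.src
  last : G.ev (steps.getLast ne) = G.snk
  dir : ∀ s ∈ steps, (s.2 = true → G.etype s.1 ≠ .backward) ∧ (s.2 = false → G.etype s.1 ≠ .forward)
  nodup : (steps.map Prod.fst).Nodup

/-- The signed characteristic vector of a route: `+1` on edges traversed from smaller to
larger endpoint, `-1` on edges traversed from larger to smaller endpoint, `0` on unused
edges. -/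
noncomputable def Route.vec {G : LGraph} (R : Route G) : Fin G.m → ℝ := fun e =>
  if (e, true) ∈ R.steps then 1 else if (e, false) ∈ R.steps then -1 else 0

end LGraph

/-- A point of `ℝ^α` is a lattice point if all its coordinates are integers. -/
def IsLatticePt {α : Type*} (x : α → ℝ) : Prop := ∀ i, ∃ z : ℤ, x i = (z : ℝ)

/-- Integral equivalence of two subsets `P ⊆ ℝ^α`, `Q ⊆ ℝ^β`: an affine map `φ` restricting
to a bijection from `P` onto `Q` and to a bijection between the lattice points of the
affine hull of `P` and those of the affine hull of `Q`. -/
def IntEquiv {α β : Type*} (P : Set (α → ℝ)) (Q : Set (β → ℝ)) : Prop :=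
  ∃ φ : (α → ℝ) →ᵃ[ℝ] (β → ℝ),
    Set.BijOn φ P Q ∧
    Set.BijOn φ ({x | IsLatticePt x} ∩ (affineSpan ℝ P : Set (α → ℝ)))
                ({x | IsLatticePt x} ∩ (affineSpan ℝ Q : Set (β → ℝ)))

/-! ### Lattice paths and the canonical indexing -/

/-- A lattice path is a list of letters, `true` = E-step `(1,0)`, `false` = N-step `(0,1)`.
`ovl ν` is the path `ν̄ = E ν N`. -/
def ovl (ν : List Bool) : List Bool := true :: ν ++ [false]

/-- Auxiliary function for the canonical indexing: `prev` is the previous letter,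
`k` is the last index used. -/
def canonIdxAux : List Bool → Bool → ℕ → List ℕ
  | [], _, _ => []
  | c :: rest, prev, k =>
    if prev && !c then k :: canonIdxAux rest c k
    else (k + 1) :: canonIdxAux rest c (k + 1)

/-- The canonical indexing of a word in `{E,N}`: reading left to right, each letter
receives the next positive integer, except that the first `N` of a maximal run of `N`s
receives the index of the immediately preceding `E` step. -/
def canonIdx (w : List Bool) : List ℕ := canonIdxAux w false 0

/-- The letter at position `p` (`true` = E). -/
def letterAt (w : List Bool) (p : ℕ) : Bool := w.getD p false

/-- The canonical index of the letter at position `p`. -/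
def idxAt (w : List Bool) (p : ℕ) : ℕ := (canonIdx w).getD p 0

/-- The largest canonical index `n` of the word `w`. -/
def nIdx (w : List Bool) : ℕ := idxAt w (w.length - 1)

/-- The set `I` of indices of E steps. -/
def Iset (w : List Bool) : Finset ℕ :=
  (((List.range w.length).filter (fun p => letterAt w p)).map (idxAt w)).toFinset

/-- The set `J` of indices of N steps. -/
def Jset (w : List Bool) : Finset ℕ :=
  (((List.range w.length).filter (fun p => !letterAt w p)).map (idxAt w)).toFinset

/-- The set `I ∩ J` of indices of valleys. -/
def Vset (w : List Bool) : Finset ℕ := Iset w ∩ Jset w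

/-- The valleys `v_1 < v_2 < ⋯ < v_w` as a sorted list. -/
def valleyList (w : List Bool) : List ℕ := (Vset w).sort (· ≤ ·)

/-- The number `w` of valleys. -/
def numVal (w : List Bool) : ℕ := (valleyList w).length

/-- The `k`-th valley `v_k` (`1 ≤ k ≤ numVal w`). -/
def vv (w : List Bool) (k : ℕ) : ℕ := (valleyList w).getD (k - 1) 0

/-! ### The ν-graph, its bidirectional version and partial augmentations -/

/-- `(i,j)` is an edge of the ν-graph iff `E_i ⋯ N_j` is a consecutive subword of `w`
whose only valleys are `E_k N_k` with `k = i` or `k = j`. -/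
def isNuEdgeB (w : List Bool) (i j : ℕ) : Bool :=
  (List.range w.length).any fun p =>
    (List.range w.length).any fun q =>
      decide (p < q) && letterAt w p && !letterAt w q &&
      decide (idxAt w p = i) && decide (idxAt w q = j) &&
      ((List.range w.length).all fun r =>
        !(decide (p ≤ r) && decide (r + 1 ≤ q) && letterAt w r && !letterAt w (r + 1)) ||
        decide (idxAt w r = i) || decide (idxAt w r = j))

/-- The list of edges `(i,j)`, `i < j`, of the ν-graph `G(ν)` (where `w = ν̄`). -/
def nuEdgePairs (w : List Bool) : List (ℕ × ℕ) :=
  ((List.range (nIdx w + 1)).flatMap fun i =>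
    (List.range (nIdx w + 1)).map fun j => (i, j)).filter
    fun p => decide (p.1 < p.2) && isNuEdgeB w p.1 p.2

/-- The edges of `G(ν)`, all forward. -/
def Gedges (w : List Bool) : List GEdge :=
  (nuEdgePairs w).map fun p => (p.1, p.2, EdgeType.forward)

/-- The edges of the bidirectional ν-graph `G_B(ν)`: an edge is bidirectional exactly
when both of its endpoints lie in `I ∩ J`. -/
def GBedges (w : List Bool) : List GEdge :=
  (nuEdgePairs w).map fun p =>
    (p.1, p.2, if p.1 ∈ Vset w ∧ p.2 ∈ Vset w then EdgeType.bidirectional else EdgeType.forward)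

/-- Out-degree of a vertex in an edge list: the number of edges traversable out of `v`. -/
def outDegL (E : List GEdge) (v : ℕ) : ℕ :=
  (E.filter fun e => (decide (e.1 = v) && decide (e.2.2 ≠ EdgeType.backward)) ||
                     (decide (e.2.1 = v) && decide (e.2.2 ≠ EdgeType.forward))).length

/-- In-degree of a vertex in an edge list: the number of edges traversable into `v`. -/
def inDegL (E : List GEdge) (v : ℕ) : ℕ :=
  (E.filter fun e => (decide (e.2.1 = v) && decide (e.2.2 ≠ EdgeType.backward)) ||
                     (decide (e.1 = v) && decide (e.2.2 ≠ EdgeType.forward))).length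

/-- The full augmentation of an edge list on inner vertices `1,…,n`: add a source `s = 0`
and a sink `t = n+1` together with forward edges `(s,i)` and `(i,t)` for all `i`. -/
def fullAug (n : ℕ) (E : List GEdge) : List GEdge :=
  E ++ ((List.range n).map fun i => (0, i + 1, EdgeType.forward))
    ++ ((List.range n).map fun i => (i + 1, n + 1, EdgeType.forward))

/-- The partial augmentation: the full augmentation with the edges `(s,i)` for which `i`
has out-degree one, and the edges `(j,t)` for which `j` has in-degree one, removed. -/
def partAug (n : ℕ) (E : List GEdge) : List GEdge :=
  E ++ ((List.range n).filterMap fun i =>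
          if outDegL (fullAug n E) (i + 1) = 1 then none else some (0, i + 1, EdgeType.forward))
    ++ ((List.range n).filterMap fun j =>
          if inDegL (fullAug n E) (j + 1) = 1 then none else some (j + 1, n + 1, EdgeType.forward))

/-- The graph `G̃_B(ν)`: the partial augmentation of the bidirectional ν-graph, with
source `s = 0` and sink `t = n+1`. -/
def GBt (w : List Bool) : LGraph := ⟨partAug (nIdx w) (GBedges w), 0, nIdx w + 1⟩

/-- The graph `G̃(ν)`: the partial augmentation of the ν-graph. -/
def Gt (w : List Bool) : LGraph := ⟨partAug (nIdx w) (Gedges w), 0, nIdx w + 1⟩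

/-- The edges of the graph `G(ν,k)`: the bidirectional path of `G_B(ν)` is replaced by
`C_ν(k)`, i.e. all edges are made forward, the forward edge `(v_k, v_{k+1})` is removed
and the backward edge `(v_1, v_w)` is added when `k < w` (for `k = w` nothing changes). -/
def GnuIedges (w : List Bool) (k : ℕ) : List GEdge :=
  ((nuEdgePairs w).filterMap fun p =>
    if k < numVal w ∧ p = (vv w k, vv w (k + 1)) then none
    else some (p.1, p.2, EdgeType.forward))
  ++ (if k < numVal w then [(vv w 1, vv w (numVal w), EdgeType.backward)] else [])

/-- The graph `G̃(ν,k)`: the partial augmentation of `G(ν,k)`. -/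
def Gnut (w : List Bool) (k : ℕ) : LGraph := ⟨partAug (nIdx w) (GnuIedges w k), 0, nIdx w + 1⟩

/-- All candidate edges on the vertex set `{0,1,…,n+1}`. -/
def allCand (n : ℕ) : List GEdge :=
  (List.range (n + 2)).flatMap fun a =>
    (List.range (n + 2)).flatMap fun b =>
      [(a, b, EdgeType.forward), (a, b, EdgeType.backward), (a, b, EdgeType.bidirectional)]

/-- The intersection `∩_{k ∈ S} G̃(ν,k)` of the partial augmentations of the graphs
`G(ν,k)`, `k ∈ S`, as a graph with source `0` and sink `n+1`. -/
def interGraph (w : List Bool) (S : Finset ℕ) : LGraph :=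
  ⟨(allCand (nIdx w)).filter fun e =>
      decide (∀ k ∈ S, e ∈ partAug (nIdx w) (GnuIedges w k)), 0, nIdx w + 1⟩

/-! ### The polytopes `Q_i` -/

/-- The condition on a route of `G̃_B(ν)` defining `Q_k` (`1 ≤ k < w`): the route does not
traverse the bidirectional edge `(v_k, v_{k+1})` forward, and traverses it backward
whenever it traverses any bidirectional edge backward. -/
def QRoute (w : List Bool) (k : ℕ) (R : LGraph.Route (GBt w)) : Prop :=
  (∀ e : Fin (GBt w).m, (GBt w).tail e = vv w k → (GBt w).head e = vv w (k + 1) →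
      (e, true) ∉ R.steps) ∧
  ((∃ s ∈ R.steps, s.2 = false) →
      ∃ e : Fin (GBt w).m, (GBt w).tail e = vv w k ∧ (GBt w).head e = vv w (k + 1) ∧
        (e, false) ∈ R.steps)

/-- The polytope `Q_k` for `1 ≤ k ≤ w`.  For `k < w` it is the convex hull of the signed
characteristic vectors of the routes satisfying `QRoute`, and `Q_w` is the flow polytope
`F_{G̃(ν)}` viewed inside `F_{G̃_B(ν)}` (the nonnegative flows). -/
def Qset (w : List Bool) (k : ℕ) : Set (Fin (GBt w).m → ℝ) :=
  if k = numVal w then { x ∈ (GBt w).flowSet | ∀ e, 0 ≤ x e }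
  else convexHull ℝ { x | ∃ R : LGraph.Route (GBt w), QRoute w k R ∧ x = R.vec }

/-! ### Products of simplices -/

/-- The `i`-th standard basis vector. -/
def stdBasisVec {α : Type*} [DecidableEq α] (i : α) : α → ℝ := fun k => if k = i then 1 else 0

/-- The product of simplices `Δ_a × Δ_b = conv{(e_i, e_j)} ⊆ ℝ^{a+1} × ℝ^{b+1}`. -/
def prodSimplices (a b : ℕ) : Set ((Fin (a + 1) ⊕ Fin (b + 1)) → ℝ) :=
  convexHull ℝ { x | ∃ (i : Fin (a + 1)) (j : Fin (b + 1)),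
    x = Sum.elim (stdBasisVec i) (stdBasisVec j) }

/-! ### Arcs and (I,J)-trees -/

/-- An arc on `w`: a pair `(i,j)` with `i ∈ I` and `j ∈ J`. -/
def IsArc (w : List Bool) (p : ℕ × ℕ) : Prop := p.1 ∈ Iset w ∧ p.2 ∈ Jset w

/-- The six configurations in which the arcs `(i,j) = p` and `(i',j') = q` cyclically
cross. -/
def CycCrossRaw (p q : ℕ × ℕ) : Prop :=
  (p.1 < q.1 ∧ q.1 < p.2 ∧ p.2 < q.2) ∨   -- i < i' < j < j'
  (q.2 < p.1 ∧ p.1 < q.1 ∧ q.1 < p.2) ∨   -- j' < i < i' < j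
  (p.2 < q.2 ∧ q.2 < p.1 ∧ p.1 < q.1) ∨   -- j < j' < i < i'
  (q.1 < p.2 ∧ p.2 < q.2 ∧ q.2 < p.1) ∨   -- i' < j < j' < i
  (p.1 < q.2 ∧ q.2 < q.1 ∧ q.1 < p.2) ∨   -- i < j' < i' < j
  (p.2 < p.1 ∧ p.1 < q.2 ∧ q.2 < q.1)     -- j < i < j' < i'

/-- Two arcs cyclically cross (up to swapping the roles of the two arcs). -/
def CycCross (p q : ℕ × ℕ) : Prop := CycCrossRaw p q ∨ CycCrossRaw q p

/-- A cyclic (I,J)-forest: a set of pairwise cyclically non-crossing arcs. -/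
def CycForest (w : List Bool) (F : Set (ℕ × ℕ)) : Prop :=
  (∀ p ∈ F, IsArc w p) ∧ ∀ p ∈ F, ∀ q ∈ F, p ≠ q → ¬ CycCross p q

/-- A cyclic (I,J)-tree: a maximal cyclic (I,J)-forest. -/
def CycTree (w : List Bool) (T : Set (ℕ × ℕ)) : Prop :=
  CycForest w T ∧ ∀ T', CycForest w T' → T ⊆ T' → T' = T

/-- An increasing (I,J)-forest: a cyclic (I,J)-forest all of whose arcs are increasing
or minimal. -/
def IncForest (w : List Bool) (F : Set (ℕ × ℕ)) : Prop :=
  CycForest w F ∧ ∀ p ∈ F, p.1 ≤ p.2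

/-- An increasing (I,J)-tree: a maximal increasing (I,J)-forest. -/
def IncTree (w : List Bool) (T : Set (ℕ × ℕ)) : Prop :=
  IncForest w T ∧ ∀ T', IncForest w T' → T ⊆ T' → T' = T

/-- Two edges `(a,b)` and `(c,d)` with `a < b`, `c < d` cross if `a < c < b < d` or
`c < a < d < b`. -/
def CrossE (p q : ℕ × ℕ) : Prop :=
  (p.1 < q.1 ∧ q.1 < p.2 ∧ p.2 < q.2) ∨ (q.1 < p.1 ∧ p.1 < q.2 ∧ q.2 < p.2)

/-- A graph on `I ∪ J` whose edges `(i,j)` satisfy `i ∈ I`, `j ∈ J`, `i < j`, which is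
alternating (every vertex is a source or a sink) and non-crossing. -/
def AltNC (w : List Bool) (H : Set (ℕ × ℕ)) : Prop :=
  (∀ p ∈ H, p.1 ∈ Iset w ∧ p.2 ∈ Jset w ∧ p.1 < p.2) ∧
  (∀ v : ℕ, (∀ p ∈ H, p.2 ≠ v) ∨ (∀ p ∈ H, p.1 ≠ v)) ∧
  (∀ p ∈ H, ∀ q ∈ H, p ≠ q → ¬ CrossE p q)

/-- The set `D_ν̄`: maximal alternating non-crossing graphs. -/
def Dnu (w : List Bool) (H : Set (ℕ × ℕ)) : Prop :=
  AltNC w H ∧ ∀ H', AltNC w H' → H ⊆ H' → H' = H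

/-- A maximal arc: `(1,n)`, or an arc `(i,j)` with `j < i` and no index strictly
between `j` and `i`. -/
def MaxArc (w : List Bool) (p : ℕ × ℕ) : Prop :=
  (p.1 = 1 ∧ p.2 = nIdx w) ∨
  (p.2 < p.1 ∧ ∀ k ∈ Iset w ∪ Jset w, ¬ (p.2 < k ∧ k < p.1))

/-! ### Cyclic peaks and rotations -/

/-- The positions `r` of the (non-wrap-around) cyclic peaks: `N` at `r` and `E` at `r+1`. -/
def peakPositions (w : List Bool) : List ℕ :=
  (List.range w.length).filter fun r => !letterAt w r && letterAt w (r + 1)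

/-- The position of the `E` step of the `l`-th cyclic peak (`1 ≤ l ≤ w`); the `w`-th
cyclic peak is the wrap-around peak, whose `E` step is at position `0`. -/
def shiftPos (w : List Bool) (l : ℕ) : ℕ :=
  if l = numVal w then 0 else (peakPositions w).getD (l - 1) 0 + 1

/-- The word `ν̄(l)` obtained by cyclically shifting `w = ν̄` to start at the `E` step of
the `l`-th cyclic peak. -/
def rotWord (w : List Bool) (l : ℕ) : List Bool :=
  w.drop (shiftPos w l) ++ w.take (shiftPos w l)

/-- The effect of the rotation on positions. -/
def rotPos (w : List Bool) (l : ℕ) (p : ℕ) : ℕ :=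
  (p + w.length - shiftPos w l) % w.length

/-- The position of the `E` step with index `i`. -/
def Epos (w : List Bool) (i : ℕ) : ℕ :=
  (((List.range w.length).filter fun p => letterAt w p && decide (idxAt w p = i))).headD 0

/-- The position of the `N` step with index `j`. -/
def Npos (w : List Bool) (j : ℕ) : ℕ :=
  (((List.range w.length).filter fun p => !letterAt w p && decide (idxAt w p = j))).headD 0

/-- The map induced on arcs by the cyclic rotation taking `ν̄` to `ν̄(l)`. -/
def arcMap (w : List Bool) (l : ℕ) (p : ℕ × ℕ) : ℕ × ℕ :=
  (idxAt (rotWord w l) (rotPos w l (Epos w p.1)),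
   idxAt (rotWord w l) (rotPos w l (Npos w p.2)))

/-- The arc determined by the `l`-th cyclic peak. -/
def peakArc (w : List Bool) (l : ℕ) : ℕ × ℕ :=
  if l = numVal w then (1, nIdx w)
  else (idxAt w ((peakPositions w).getD (l - 1) 0 + 1), idxAt w ((peakPositions w).getD (l - 1) 0))

end FP

namespace FPAux
open FP FP.LGraph

variable (G : LGraph)

/-- helper: every `Fin G.m` is an edge of the list -/
lemma edge_mem (e : Fin G.m) : G.edges.get e ∈ G.edges := by
  have := G.edges.get_mem e; simpa using this

lemma tail_lt_head {n : ℕ} (hwf : G.WF n) (e : Fin G.m) : G.tail e < G.head e :=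
  (hwf _ (edge_mem G e)).2.1

lemma head_le {n : ℕ} (hwf : G.WF n) (e : Fin G.m) : G.head e ≤ n :=
  (hwf _ (edge_mem G e)).2.2

lemma tail_le {n : ℕ} (hwf : G.WF n) (e : Fin G.m) : G.tail e ≤ n :=
  le_of_lt (lt_of_lt_of_le (tail_lt_head G hwf e) (head_le G hwf e))

lemma netflow_lin (a b : ℝ) (x y : Fin G.m → ℝ) (v : ℕ) :
    G.netflow (fun e => a * x e + b * y e) v = a * G.netflow x v + b * G.netflow y v := by
  simp only [LGraph.netflow, Finset.mul_sum, ← Finset.sum_add_distrib]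
  apply Finset.sum_congr rfl
  intro e _
  split_ifs <;> ring

lemma netflow_zero (v : ℕ) : G.netflow (fun _ => (0:ℝ)) v = 0 := by
  simp [LGraph.netflow]

lemma telescope (v : ℕ) : ∀ (l : List (Fin G.m × Bool)) (h : l ≠ [])
    (_ : l.Chain' fun s t => G.ev s = G.sv t),
    (l.map fun s => (if G.sv s = v then (1:ℝ) else 0) - (if G.ev s = v then 1 else 0)).sum
      = (if G.sv (l.head h) = v then 1 else 0) - (if G.ev (l.getLast h) = v then 1 else 0)
  | [], h, _ => absurd rfl h
  | [s], _, _ => by simp; rfl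
  | s :: t :: r, hne, hc => by
    have hc' : (t :: r).Chain' fun s t => G.ev s = G.sv t := hc.tail
    have hev : G.ev s = G.sv t := (List.isChain_cons_cons.mp hc).1
    have ih := telescope v (t :: r) (by simp) hc'
    have hgl : (s :: t :: r).getLast (by simp) = (t :: r).getLast (by simp) :=
      List.getLast_cons (by simp)
    have hhd : (s :: t :: r).head hne = s := rfl
    have hhd2 : (t :: r).head (by simp) = t := rfl
    simp only [List.map_cons, List.sum_cons, hhd2] at ih ⊢
    rw [ih, hgl, hhd, ← hev]
    ring

lemma sum_over_steps (f : Fin G.m × Bool → ℝ) :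
    ∀ (l : List (Fin G.m × Bool)) (_ : (l.map Prod.fst).Nodup),
    (∑ e : Fin G.m, (if (e, true) ∈ l then f (e, true)
      else if (e, false) ∈ l then f (e, false) else 0)) = (l.map f).sum
  | [], _ => by simp
  | s :: r, hnd => by
    have hnd' : (r.map Prod.fst).Nodup := (List.nodup_cons.mp hnd).2
    have hsf : s.1 ∉ r.map Prod.fst := (List.nodup_cons.mp hnd).1
    have ih := sum_over_steps f r hnd'
    have hmem : ∀ c : Bool, (s.1, c) ∉ r := by
      intro c hmemc
      exact hsf (List.mem_map.mpr ⟨(s.1, c), hmemc, rfl⟩)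
    rw [List.map_cons, List.sum_cons, ← ih]
    have key : ∀ e : Fin G.m,
        (if (e, true) ∈ s :: r then f (e, true)
          else if (e, false) ∈ s :: r then f (e, false) else 0)
        = (if (e, true) ∈ r then f (e, true) else if (e, false) ∈ r then f (e, false) else 0)
          + (if e = s.1 then f s else 0) := by
      intro e
      by_cases he : e = s.1
      · have h0t : (e, true) ∉ r := by rw [he]; exact hmem true
        have h0f : (e, false) ∉ r := by rw [he]; exact hmem false
        have hse : s = (e, s.2) := by rw [he]
        rcases Bool.eq_false_or_eq_true s.2 with h2 | h2
        · have hsval : s = (e, true) := by rw [hse, h2]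
          have hs : (e, true) ∈ s :: r := by rw [hsval]; exact List.mem_cons_self
          rw [if_pos hs, if_neg h0t, if_neg h0f, if_pos he, zero_add, hsval]
        · have hsval : s = (e, false) := by rw [hse, h2]
          have hs : (e, false) ∈ s :: r := by rw [hsval]; exact List.mem_cons_self
          have hns : (e, true) ∉ s :: r := by
            intro hx
            rcases List.mem_cons.mp hx with hx | hx
            · rw [hsval] at hx; simp at hx
            · exact h0t hx
          rw [if_neg hns, if_pos hs, if_neg h0t, if_neg h0f, if_pos he, zero_add, hsval]
      · have h1 : ((e, true) ∈ s :: r) ↔ ((e, true) ∈ r) := by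
          constructor
          · intro hx
            rcases List.mem_cons.mp hx with hx | hx
            · exact absurd (congrArg Prod.fst hx) he
            · exact hx
          · exact fun hx => List.mem_cons_of_mem _ hx
        have h2 : ((e, false) ∈ s :: r) ↔ ((e, false) ∈ r) := by
          constructor
          · intro hx
            rcases List.mem_cons.mp hx with hx | hx
            · exact absurd (congrArg Prod.fst hx) he
            · exact hx
          · exact fun hx => List.mem_cons_of_mem _ hx
        simp only [h1, h2, if_neg he, add_zero]
    simp only [key]
    rw [Finset.sum_add_distrib, Finset.sum_ite_eq' (Finset.univ) (s.1) (fun _ => f s)]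
    simp only [Finset.mem_univ, if_pos]
    exact add_comm _ _

end FPAux

namespace FPAux
open FP FP.LGraph

variable (G : LGraph)

lemma vec_netflow {n : ℕ} (hwf : G.WF n) (R : LGraph.Route G) (v : ℕ) :
    G.netflow R.vec v = (if v = G.src then (1:ℝ) else 0) - (if v = G.snk then 1 else 0) := by
  classical
  set c : Fin G.m → ℝ := fun e => (if G.tail e = v then (1:ℝ) else 0) - (if G.head e = v then 1 else 0) with hc
  set f : Fin G.m × Bool → ℝ := fun s => if s.2 then c s.1 else -(c s.1) with hf
  have h1 : G.netflow R.vec v = ∑ e : Fin G.m,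
      (if (e, true) ∈ R.steps then f (e, true) else if (e, false) ∈ R.steps then f (e, false) else 0) := by
    apply Finset.sum_congr rfl
    intro e _
    simp only [hf, hc, LGraph.Route.vec]
    split_ifs <;> (first | ring1 | simp_all)
  rw [h1, sum_over_steps G f R.steps R.nodup]
  have h2 : R.steps.map f = R.steps.map fun s =>
      (if G.sv s = v then (1:ℝ) else 0) - (if G.ev s = v then 1 else 0) := by
    apply List.map_congr_left
    intro s _
    simp only [hf, hc, LGraph.sv, LGraph.ev]
    rcases Bool.eq_false_or_eq_true s.2 with h | h <;> simp only [h] <;> simp <;> ring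
  rw [h2, telescope G v R.steps R.ne R.chain, R.first, R.last]
  simp [eq_comm]

lemma vec_mem_flowSet {n : ℕ} (hwf : G.WF n) (R : LGraph.Route G) : R.vec ∈ G.flowSet := by
  constructor
  · exact vec_netflow G hwf R
  · intro e
    constructor
    · intro hfw
      simp only [LGraph.Route.vec]
      by_cases h1 : (e, true) ∈ R.steps
      · simp [h1]
      · by_cases h2 : (e, false) ∈ R.steps
        · exact absurd hfw ((R.dir _ h2).2 rfl)
        · simp [h1, h2]
    · intro hbw
      simp only [LGraph.Route.vec]
      by_cases h1 : (e, true) ∈ R.steps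
      · exact absurd hbw ((R.dir _ h1).1 rfl)
      · by_cases h2 : (e, false) ∈ R.steps <;> simp [h1, h2]

lemma convex_flowSet : Convex ℝ G.flowSet := by
  intro x hx y hy a b ha hb hab
  have hxy : (a • x + b • y) = fun e => a * x e + b * y e := by
    funext e; simp [mul_comm]
  constructor
  · intro v
    rw [hxy, netflow_lin, hx.1 v, hy.1 v]
    split_ifs <;> (first | ring1 | linarith)
  · intro e
    constructor
    · intro hfw
      rw [hxy]
      exact add_nonneg (mul_nonneg ha ((hx.2 e).1 hfw)) (mul_nonneg hb ((hy.2 e).1 hfw))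
    · intro hbw
      rw [hxy]
      have h1 := mul_nonpos_of_nonneg_of_nonpos ha ((hx.2 e).2 hbw)
      have h2 := mul_nonpos_of_nonneg_of_nonpos hb ((hy.2 e).2 hbw)
      show a * x e + b * y e ≤ 0
      linarith

/-- if the netflow at `v` is nonnegative, and either positive or there is an edge
carrying flow into `v`, then there is an edge carrying flow out of `v`. -/
lemma exists_out {n : ℕ} (hwf : G.WF n) (x : Fin G.m → ℝ) (v : ℕ)
    (hnet : 0 ≤ G.netflow x v)
    (h : 0 < G.netflow x v ∨ ∃ e, (G.head e = v ∧ 0 < x e) ∨ (G.tail e = v ∧ x e < 0)) :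
    ∃ e, (G.tail e = v ∧ 0 < x e) ∨ (G.head e = v ∧ x e < 0) := by
  by_contra hout
  push_neg at hout
  have hterm : ∀ e : Fin G.m,
      ((if G.tail e = v then x e else 0) - (if G.head e = v then x e else 0)) ≤ 0 := by
    intro e
    have hne : G.tail e ≠ G.head e := ne_of_lt (tail_lt_head G hwf e)
    by_cases ht : G.tail e = v
    · have hh : G.head e ≠ v := fun hh => hne (ht.trans hh.symm)
      rw [if_pos ht, if_neg hh, sub_zero]
      exact (hout e).1 ht
    · by_cases hh : G.head e = v
      · rw [if_neg ht, if_pos hh, zero_sub, neg_nonpos]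
        exact le_of_not_gt fun hlt => absurd hlt (not_lt.mpr ((hout e).2 hh))
      · simp [ht, hh]
  have hle : G.netflow x v ≤ 0 := Finset.sum_nonpos fun e _ => hterm e
  rcases h with h | ⟨e0, h0⟩
  · linarith
  · have hstrict : G.netflow x v < 0 := by
      have hlt := Finset.sum_lt_sum (s := (Finset.univ : Finset (Fin G.m)))
        (f := fun e : Fin G.m => (if G.tail e = v then x e else 0) - (if G.head e = v then x e else 0))
        (g := fun _ => (0:ℝ)) (fun e _ => hterm e) ?_
      · simpa [LGraph.netflow] using hlt
      · refine ⟨e0, Finset.mem_univ e0, ?_⟩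
        have hne : G.tail e0 ≠ G.head e0 := ne_of_lt (tail_lt_head G hwf e0)
        rcases h0 with ⟨hh, hx0⟩ | ⟨ht, hx0⟩
        · have ht : G.tail e0 ≠ v := fun ht => hne (ht.trans hh.symm)
          simp only [if_neg ht, if_pos hh]
          linarith
        · have hh : G.head e0 ≠ v := fun hh => hne (ht.trans hh.symm)
          simp only [if_pos ht, if_neg hh]
          linarith
    linarith

end FPAux

namespace FPAux
open FP FP.LGraph

variable (G : LGraph)

lemma walk_trans (FS : ℕ → ℕ → Prop) (g : ℕ → ℕ) :
    ∀ l k : ℕ, k < l → (∀ j, k ≤ j → j < l → FS (g j) (g (j + 1))) →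
    Relation.TransGen FS (g k) (g l) := by
  intro l
  induction l with
  | zero => intro k hk; omega
  | succ l ih =>
    intro k hkl hstep
    rcases Nat.lt_succ_iff_lt_or_eq.mp hkl with h | h
    · exact (ih k h fun j hj hj2 => hstep j hj (by omega)).tail (hstep l (by omega) (by omega))
    · subst h
      exact Relation.TransGen.single (hstep k le_rfl (by omega))

lemma no_infinite_dwalk {n : ℕ} (hwf : G.WF n) (hacyc : G.Acyclic) (g : ℕ → ℕ)
    (hg : ∀ k, G.DStep (g k) (g (k + 1))) : False := by
  have hb : ∀ k : ℕ, g (k + 1) ∈ Finset.range (n + 1) := by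
    intro k
    rcases hg k with ⟨e, h | h⟩
    · rw [Finset.mem_range, Nat.lt_succ_iff, ← h.2.1]
      exact head_le G hwf e
    · rw [Finset.mem_range, Nat.lt_succ_iff, ← h.2.1]
      exact tail_le G hwf e
  obtain ⟨k, -, l, -, hne, heq⟩ :=
    Finset.exists_ne_map_eq_of_card_lt_of_maps_to
      (s := Finset.range (n + 2)) (t := Finset.range (n + 1)) (by simp)
      (f := fun k => g (k + 1)) (fun a _ => hb a)
  have key : ∀ a b : ℕ, a < b → g (a + 1) = g (b + 1) → False := by
    intro a b hab he
    have ht := walk_trans G.DStep g (b + 1) (a + 1) (by omega) (fun j _ _ => hg j)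
    rw [he] at ht
    exact hacyc _ ht
  rcases hne.lt_or_gt with h | h
  · exact key k l h heq
  · exact key l k h heq.symm

end FPAux

namespace FPAux
open FP FP.LGraph

variable (G : LGraph)

lemma sv_cases (s : Fin G.m × Bool) :
    (G.sv s = G.tail s.1 ∧ G.ev s = G.head s.1) ∨ (G.sv s = G.head s.1 ∧ G.ev s = G.tail s.1) := by
  rcases Bool.eq_false_or_eq_true s.2 with h | h
  · left; simp [LGraph.sv, LGraph.ev, h]
  · right; simp [LGraph.sv, LGraph.ev, h]

theorem exists_route {n : ℕ} (hn : 2 ≤ n) (hsrc : G.src = 1) (hsnk : G.snk = n)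
    (hwf : G.WF n) (hacyc : G.Acyclic) (x : Fin G.m → ℝ) (hx : x ∈ G.flowSet) :
    ∃ R : LGraph.Route G, ∀ s ∈ R.steps, (s.2 = true → 0 < x s.1) ∧ (s.2 = false → x s.1 < 0) := by
  classical
  set FS : ℕ → ℕ → Prop := fun a b =>
    ∃ e, (G.tail e = a ∧ G.head e = b ∧ 0 < x e) ∨ (G.head e = a ∧ G.tail e = b ∧ x e < 0)
    with hFSdef
  set Inn : ℕ → Prop := fun v => ∃ e, (G.head e = v ∧ 0 < x e) ∨ (G.tail e = v ∧ x e < 0)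
    with hInndef
  have hFSD : ∀ a b, FS a b → G.DStep a b := by
    rintro a b ⟨e, ⟨h1, h2, h3⟩ | ⟨h1, h2, h3⟩⟩
    · exact ⟨e, Or.inl ⟨h1, h2, fun hb => absurd ((hx.2 e).2 hb) (not_le.mpr h3)⟩⟩
    · exact ⟨e, Or.inr ⟨h1, h2, fun hf => absurd ((hx.2 e).1 hf) (not_le.mpr h3)⟩⟩
  have hFSInn : ∀ a b, FS a b → Inn b := by
    rintro a b ⟨e, ⟨h1, h2, h3⟩ | ⟨h1, h2, h3⟩⟩
    · exact ⟨e, Or.inl ⟨h2, h3⟩⟩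
    · exact ⟨e, Or.inr ⟨h2, h3⟩⟩
  have hprog : ∀ v, v ≠ G.snk → (v = G.src ∨ Inn v) → ∃ b, FS v b := by
    intro v hv hin
    have h0 : G.netflow x v = (if v = G.src then 1 else 0) := by
      rw [hx.1 v, if_neg hv, sub_zero]
    have hout : ∃ e, (G.tail e = v ∧ 0 < x e) ∨ (G.head e = v ∧ x e < 0) := by
      rcases hin with h | h
      · exact exists_out G hwf x v (by rw [h0, if_pos h]; norm_num)
          (Or.inl (by rw [h0, if_pos h]; norm_num))
      · exact exists_out G hwf x v (by rw [h0]; split_ifs <;> norm_num) (Or.inr h)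
    obtain ⟨e, h | h⟩ := hout
    · exact ⟨G.head e, e, Or.inl ⟨h.1, rfl, h.2⟩⟩
    · exact ⟨G.tail e, e, Or.inr ⟨h.1, rfl, h.2⟩⟩
  -- the walk
  set nxt : ℕ → ℕ := fun v => if h : ∃ b, FS v b then h.choose else v with hnxtdef
  have hnxt : ∀ v (h : ∃ b, FS v b), FS v (nxt v) := by
    intro v h
    simp only [hnxtdef, dif_pos h]
    exact h.choose_spec
  set g : ℕ → ℕ := fun k => nxt^[k] G.src with hgdef
  have hg0 : g 0 = G.src := rfl
  have hgs : ∀ k, g (k + 1) = nxt (g k) := by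
    intro k; simp only [hgdef, Function.iterate_succ_apply']
  have hsrcsnk : G.src ≠ G.snk := by rw [hsrc, hsnk]; omega
  -- the walk reaches the sink
  have hsnkreach : ∃ L, g L = G.snk := by
    by_contra hno
    push_neg at hno
    have hQ : ∀ k, g k = G.src ∨ Inn (g k) := by
      intro k
      induction k with
      | zero => exact Or.inl hg0
      | succ k ih =>
        right
        rw [hgs k]
        exact hFSInn _ _ (hnxt _ (hprog _ (hno k) ih))
    have hFSall : ∀ k, FS (g k) (g (k + 1)) := by
      intro k
      rw [hgs k]
      exact hnxt _ (hprog _ (hno k) (hQ k))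
    exact no_infinite_dwalk G hwf hacyc g fun k => hFSD _ _ (hFSall k)
  set L := Nat.find hsnkreach with hLdef
  have hgL : g L = G.snk := Nat.find_spec hsnkreach
  have hmin : ∀ j, j < L → g j ≠ G.snk := fun j hj => Nat.find_min hsnkreach hj
  have hL0 : 0 < L := by
    rcases Nat.eq_zero_or_pos L with h | h
    · rw [h] at hgL; exact absurd (hg0 ▸ hgL) hsrcsnk
    · exact h
  have hQ : ∀ j, j ≤ L → g j = G.src ∨ Inn (g j) := by
    intro j
    induction j with
    | zero => exact fun _ => Or.inl hg0
    | succ j ih =>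
      intro hj
      right
      rw [hgs j]
      exact hFSInn _ _ (hnxt _ (hprog _ (hmin j (by omega)) (ih (by omega))))
  have hFS : ∀ j, j < L → FS (g j) (g (j + 1)) := by
    intro j hj
    rw [hgs j]
    exact hnxt _ (hprog _ (hmin j hj) (hQ j hj.le))
  have hinj : ∀ i j, i < j → j ≤ L → g i ≠ g j := by
    intro i j hij hjL heq
    have ht := walk_trans FS g j i hij fun j' h1 h2 => hFS j' (by omega)
    rw [← heq] at ht
    exact hacyc _ (Relation.TransGen.mono hFSD _ _ ht)
  -- the steps
  set stp : ∀ j : Fin L, Fin G.m × Bool := fun j =>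
    ((hFS j j.2).choose,
      if G.tail (hFS j j.2).choose = g j ∧ 0 < x (hFS j j.2).choose then true else false)
    with hstpdef
  have hstp : ∀ j : Fin L,
      G.sv (stp j) = g j ∧ G.ev (stp j) = g (j + 1) ∧
      ((stp j).2 = true → 0 < x (stp j).1) ∧ ((stp j).2 = false → x (stp j).1 < 0) := by
    intro j
    have spec := (hFS j j.2).choose_spec
    set e := (hFS j j.2).choose with hedef
    by_cases hc : G.tail e = g j ∧ 0 < x e
    · have hfwd : G.tail e = g (j : ℕ) ∧ G.head e = g (j + 1) ∧ 0 < x e := by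
        rcases spec with h | h
        · exact h
        · exact absurd hc.2 (by linarith [h.2.2])
      have h2 : stp j = (e, true) := by simp only [hstpdef, ← hedef, if_pos hc]
      rw [h2]
      exact ⟨by simp [LGraph.sv, hfwd.1], by simp [LGraph.ev, hfwd.2.1],
        fun _ => hfwd.2.2, fun h => by simp at h⟩
    · have hbwd : G.head e = g (j : ℕ) ∧ G.tail e = g (j + 1) ∧ x e < 0 := by
        rcases spec with h | h
        · exact absurd ⟨h.1, h.2.2⟩ hc
        · exact h
      have h2 : stp j = (e, false) := by simp only [hstpdef, ← hedef, if_neg hc]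
      rw [h2]
      exact ⟨by simp [LGraph.sv, hbwd.1], by simp [LGraph.ev, hbwd.2.1],
        fun h => by simp at h, fun _ => hbwd.2.2⟩
  set steps : List (Fin G.m × Bool) := List.ofFn stp with hstepsdef
  have hlen : steps.length = L := by simp [hstepsdef]
  have hne : steps ≠ [] := by
    intro h
    rw [h] at hlen
    simp at hlen
    omega
  have hget : ∀ (i : ℕ) (hi : i < steps.length), steps.get ⟨i, hi⟩ = stp ⟨i, by omega⟩ := by
    intro i hi
    exact List.get_ofFn stp ⟨i, hi⟩
  refine ⟨⟨steps, hne, ?_, ?_, ?_, ?_, ?_⟩, ?_⟩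
  · -- chain
    refine List.isChain_iff_getElem.mpr ?_
    intro i hi
    show G.ev (steps.get ⟨i, by omega⟩) = G.sv (steps.get ⟨i + 1, hi⟩)
    rw [hget i (by omega), hget (i + 1) (by omega)]
    have h1 := (hstp ⟨i, by omega⟩).2.1
    have h2 := (hstp ⟨i + 1, by omega⟩).1
    simp only at h1 h2 ⊢
    rw [h1, h2]
  · -- first
    have : steps.head hne = steps.get ⟨0, by omega⟩ := by
      rw [← List.get_mk_zero (by omega : 0 < steps.length)]
    rw [this, hget 0 (by omega)]
    have := (hstp ⟨0, by omega⟩).1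
    simpa [hg0] using this
  · -- last
    rw [List.getLast_eq_getElem]
    show G.ev (steps.get ⟨steps.length - 1, by omega⟩) = _
    rw [hget _ (by omega)]
    have := (hstp ⟨steps.length - 1, by omega⟩).2.1
    simp only at this ⊢
    rw [this]
    have : steps.length - 1 + 1 = L := by omega
    rw [this, hgL]
  · -- dir
    intro s hs
    have hs' : s ∈ List.ofFn stp := hs
    rw [List.mem_ofFn] at hs'
    obtain ⟨j, rfl⟩ := hs'
    have h := (hstp j).2.2
    constructor
    · intro ht hb
      have := (hx.2 (stp j).1).2 hb
      linarith [h.1 ht]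
    · intro hf hfw
      have := (hx.2 (stp j).1).1 hfw
      linarith [h.2 hf]
  · -- nodup
    have : steps.map Prod.fst = List.ofFn fun j => (stp j).1 := by
      rw [hstepsdef, List.map_ofFn]; rfl
    rw [this, List.nodup_ofFn]
    intro i j heq
    by_contra hij
    have key : ∀ a b : Fin L, a < b → (stp a).1 = (stp b).1 → False := by
      intro a b hab he
      have ha := hstp a
      have hb := hstp b
      have hga : g (a : ℕ) = G.tail (stp a).1 ∨ g (a : ℕ) = G.head (stp a).1 := by
        rcases sv_cases G (stp a) with h | h
        · exact Or.inl (ha.1.symm.trans h.1)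
        · exact Or.inr (ha.1.symm.trans h.1)
      have hcov : ∀ u : ℕ, u = G.tail (stp b).1 ∨ u = G.head (stp b).1 →
          u = g (b : ℕ) ∨ u = g ((b : ℕ) + 1) := by
        intro u hu
        rcases sv_cases G (stp b) with h | h
        · rcases hu with hu | hu
          · exact Or.inl (by rw [hu, ← h.1, hb.1])
          · exact Or.inr (by rw [hu, ← h.2, hb.2.1])
        · rcases hu with hu | hu
          · exact Or.inr (by rw [hu, ← h.2, hb.2.1])
          · exact Or.inl (by rw [hu, ← h.1, hb.1])
      have : g (a : ℕ) = g (b : ℕ) ∨ g (a : ℕ) = g ((b : ℕ) + 1) := by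
        apply hcov
        rw [← he]
        exact hga
      rcases this with h | h
      · exact hinj a b (by exact_mod_cast hab) (le_of_lt b.2) h
      · exact hinj a ((b : ℕ) + 1) (by omega) (by omega) h
    rcases Ne.lt_or_gt hij with h | h
    · exact key i j h heq
    · exact key j i h heq.symm
  · -- property
    intro s hs
    have hs' : s ∈ List.ofFn stp := hs
    rw [List.mem_ofFn] at hs'
    obtain ⟨j, rfl⟩ := hs'
    exact (hstp j).2.2

end FPAux

namespace FPAux
open FP FP.LGraph

variable (G : LGraph)

lemma zero_flow {n : ℕ} (hwf : G.WF n) (hacyc : G.Acyclic) (z : Fin G.m → ℝ)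
    (hcons : ∀ v, G.netflow z v = 0)
    (hsign : ∀ e, (G.etype e = .forward → 0 ≤ z e) ∧ (G.etype e = .backward → z e ≤ 0)) :
    ∀ e, z e = 0 := by
  classical
  by_contra hcon
  push_neg at hcon
  obtain ⟨e0, he0⟩ := hcon
  set FS : ℕ → ℕ → Prop := fun a b =>
    ∃ e, (G.tail e = a ∧ G.head e = b ∧ 0 < z e) ∨ (G.head e = a ∧ G.tail e = b ∧ z e < 0)
    with hFSdef
  set Inn : ℕ → Prop := fun v => ∃ e, (G.head e = v ∧ 0 < z e) ∨ (G.tail e = v ∧ z e < 0)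
    with hInndef
  have hFSD : ∀ a b, FS a b → G.DStep a b := by
    rintro a b ⟨e, ⟨h1, h2, h3⟩ | ⟨h1, h2, h3⟩⟩
    · exact ⟨e, Or.inl ⟨h1, h2, fun hb => absurd ((hsign e).2 hb) (not_le.mpr h3)⟩⟩
    · exact ⟨e, Or.inr ⟨h1, h2, fun hf => absurd ((hsign e).1 hf) (not_le.mpr h3)⟩⟩
  have hFSInn : ∀ a b, FS a b → Inn b := by
    rintro a b ⟨e, ⟨h1, h2, h3⟩ | ⟨h1, h2, h3⟩⟩
    · exact ⟨e, Or.inl ⟨h2, h3⟩⟩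
    · exact ⟨e, Or.inr ⟨h2, h3⟩⟩
  have hprog : ∀ v, Inn v → ∃ b, FS v b := by
    intro v hin
    have hout := exists_out G hwf z v (le_of_eq (hcons v).symm) (Or.inr hin)
    obtain ⟨e, h | h⟩ := hout
    · exact ⟨G.head e, e, Or.inl ⟨h.1, rfl, h.2⟩⟩
    · exact ⟨G.tail e, e, Or.inr ⟨h.1, rfl, h.2⟩⟩
  -- starting vertex with inflow
  have hstart : ∃ v, Inn v := by
    rcases lt_or_gt_of_ne he0 with h | h
    · exact ⟨G.tail e0, e0, Or.inr ⟨rfl, h⟩⟩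
    · exact ⟨G.head e0, e0, Or.inl ⟨rfl, h⟩⟩
  obtain ⟨v0, hv0⟩ := hstart
  set nxt : ℕ → ℕ := fun v => if h : ∃ b, FS v b then h.choose else v with hnxtdef
  have hnxt : ∀ v (h : ∃ b, FS v b), FS v (nxt v) := by
    intro v h
    simp only [hnxtdef, dif_pos h]
    exact h.choose_spec
  set g : ℕ → ℕ := fun k => nxt^[k] v0 with hgdef
  have hgs : ∀ k, g (k + 1) = nxt (g k) := by
    intro k; simp only [hgdef, Function.iterate_succ_apply']
  have hQ : ∀ k, Inn (g k) := by
    intro k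
    induction k with
    | zero => exact hv0
    | succ k ih =>
      rw [hgs k]
      exact hFSInn _ _ (hnxt _ (hprog _ ih))
  exact no_infinite_dwalk G hwf hacyc g fun k => hFSD _ _ (by rw [hgs k]; exact hnxt _ (hprog _ (hQ k)))

theorem flow_decomp {n : ℕ} (hn : 2 ≤ n) (hsrc : G.src = 1) (hsnk : G.snk = n)
    (hwf : G.WF n) (hacyc : G.Acyclic) :
    ∀ N : ℕ, ∀ x ∈ G.flowSet, (Finset.univ.filter fun e => x e ≠ 0).card ≤ N →
    x ∈ convexHull ℝ { y | ∃ R : LGraph.Route G, y = R.vec } := by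
  classical
  intro N
  induction N with
  | zero =>
    intro x hx hcard
    exfalso
    have hx0 : ∀ e, x e = 0 := by
      intro e
      by_contra he
      have : e ∈ Finset.univ.filter fun e => x e ≠ 0 := Finset.mem_filter.mpr ⟨Finset.mem_univ e, he⟩
      have := Finset.card_pos.mpr ⟨e, this⟩
      omega
    have h1 : G.netflow x G.src = 0 := by
      have : x = fun _ => 0 := funext hx0
      rw [this, netflow_zero]
    have h2 := hx.1 G.src
    rw [h1, if_pos rfl, if_neg (by rw [hsrc, hsnk]; omega)] at h2
    norm_num at h2
  | succ N ih =>
    intro x hx hcard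
    obtain ⟨R, hR⟩ := exists_route G hn hsrc hsnk hwf hacyc x hx
    -- minimum of |x e| over the route
    have hTne : (R.steps.toFinset.image fun s => |x s.1|).Nonempty := by
      refine Finset.image_nonempty.mpr ?_
      rw [List.toFinset_nonempty_iff]
      exact R.ne
    set lam : ℝ := (R.steps.toFinset.image fun s => |x s.1|).min' hTne with hlamdef
    obtain ⟨sm, hsmmem, hsmeq⟩ := Finset.mem_image.mp
      ((R.steps.toFinset.image fun s => |x s.1|).min'_mem hTne)
    rw [List.mem_toFinset] at hsmmem
    rw [← hlamdef] at hsmeq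
    have hlamle : ∀ s ∈ R.steps, lam ≤ |x s.1| := by
      intro s hs
      exact Finset.min'_le _ _ (Finset.mem_image_of_mem _ (List.mem_toFinset.mpr hs))
    have hsignstep : ∀ s ∈ R.steps, x s.1 ≠ 0 := by
      intro s hs
      rcases Bool.eq_false_or_eq_true s.2 with h | h
      · exact ne_of_gt ((hR s hs).1 h)
      · exact ne_of_lt ((hR s hs).2 h)
    have hlam0 : 0 < lam := by
      rw [← hsmeq]
      exact abs_pos.mpr (hsignstep sm hsmmem)
    -- basic facts about R.vec
    have hvec1 : ∀ e, (e, true) ∈ R.steps → R.vec e = 1 := by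
      intro e he
      simp only [LGraph.Route.vec, if_pos he]
    have hnotboth : ∀ e, (e, true) ∈ R.steps → (e, false) ∈ R.steps → False := by
      intro e h1 h2
      have := List.inj_on_of_nodup_map R.nodup h1 h2 rfl
      simp at this
    have hvec2 : ∀ e, (e, false) ∈ R.steps → R.vec e = -1 := by
      intro e he
      have h1 : (e, true) ∉ R.steps := fun h => hnotboth e h he
      simp only [LGraph.Route.vec, if_neg h1, if_pos he]
    have hvec0 : ∀ e, (e, true) ∉ R.steps → (e, false) ∉ R.steps → R.vec e = 0 := by
      intro e h1 h2
      simp only [LGraph.Route.vec, if_neg h1, if_neg h2]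
    have hTrue : ∀ e, (e, true) ∈ R.steps → lam ≤ x e := by
      intro e he
      have h1 := hlamle _ he
      have h2 := (hR _ he).1 rfl
      rw [abs_of_pos h2] at h1
      exact h1
    have hFalse : ∀ e, (e, false) ∈ R.steps → x e ≤ -lam := by
      intro e he
      have h1 := hlamle _ he
      have h2 := (hR _ he).2 rfl
      rw [abs_of_neg h2] at h1
      linarith
    by_cases hcase : 1 ≤ lam
    · -- x = R.vec
      have hz := zero_flow G hwf hacyc (fun e => x e - R.vec e) ?_ ?_
      · have hxv : x = R.vec := funext fun e => by have := hz e; linarith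
        apply subset_convexHull
        exact ⟨R, hxv⟩
      · intro v
        have h1 : (fun e => x e - R.vec e) = fun e => 1 * x e + (-1) * R.vec e := by
          funext e; ring
        rw [h1, netflow_lin, hx.1 v, vec_netflow G hwf R v]
        ring
      · intro e
        constructor
        · intro hfw
          show 0 ≤ x e - R.vec e
          by_cases h1 : (e, true) ∈ R.steps
          · rw [hvec1 e h1]
            linarith [hTrue e h1]
          · by_cases h2 : (e, false) ∈ R.steps
            · exact absurd hfw ((R.dir _ h2).2 rfl)
            · rw [hvec0 e h1 h2]
              linarith [(hx.2 e).1 hfw]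
        · intro hbw
          show x e - R.vec e ≤ 0
          by_cases h1 : (e, true) ∈ R.steps
          · exact absurd hbw ((R.dir _ h1).1 rfl)
          · by_cases h2 : (e, false) ∈ R.steps
            · rw [hvec2 e h2]
              linarith [hFalse e h2]
            · rw [hvec0 e h1 h2]
              linarith [(hx.2 e).2 hbw]
    · push_neg at hcase
      have h1lam : (0:ℝ) < 1 - lam := by linarith
      have h1lamne : (1:ℝ) - lam ≠ 0 := ne_of_gt h1lam
      set y : Fin G.m → ℝ := fun e => (1 - lam)⁻¹ * (x e - lam * R.vec e) with hydef
      have hxzero_route : ∀ e, x e = 0 → R.vec e = 0 := by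
        intro e hxe
        apply hvec0
        · intro h; exact absurd hxe (hsignstep _ h)
        · intro h; exact absurd hxe (hsignstep _ h)
      have hy0 : ∀ e, x e = 0 → y e = 0 := by
        intro e hxe
        show (1 - lam)⁻¹ * (x e - lam * R.vec e) = 0
        rw [hxe, hxzero_route e hxe]
        ring
      -- y is a flow
      have hyflow : y ∈ G.flowSet := by
        constructor
        · intro v
          have h1 : y = fun e => (1 - lam)⁻¹ * x e + (-( (1 - lam)⁻¹ * lam)) * R.vec e := by
            funext e; simp only [hydef]; ring
          rw [h1, netflow_lin, hx.1 v, vec_netflow G hwf R v]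
          field_simp
          ring
        · intro e
          constructor
          · intro hfw
            show 0 ≤ (1 - lam)⁻¹ * (x e - lam * R.vec e)
            apply mul_nonneg (le_of_lt (inv_pos.mpr h1lam))
            by_cases h1 : (e, true) ∈ R.steps
            · rw [hvec1 e h1]; linarith [hTrue e h1]
            · by_cases h2 : (e, false) ∈ R.steps
              · exact absurd hfw ((R.dir _ h2).2 rfl)
              · rw [hvec0 e h1 h2]; linarith [(hx.2 e).1 hfw]
          · intro hbw
            show (1 - lam)⁻¹ * (x e - lam * R.vec e) ≤ 0
            apply mul_nonpos_of_nonneg_of_nonpos (le_of_lt (inv_pos.mpr h1lam))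
            by_cases h1 : (e, true) ∈ R.steps
            · exact absurd hbw ((R.dir _ h1).1 rfl)
            · by_cases h2 : (e, false) ∈ R.steps
              · rw [hvec2 e h2]; linarith [hFalse e h2]
              · rw [hvec0 e h1 h2]; linarith [(hx.2 e).2 hbw]
      -- the minimizing edge is killed
      have hym : y sm.1 = 0 := by
        show (1 - lam)⁻¹ * (x sm.1 - lam * R.vec sm.1) = 0
        rcases Bool.eq_false_or_eq_true sm.2 with hb | hb
        · have hmem : (sm.1, true) ∈ R.steps := by
            have : sm = (sm.1, true) := by rw [← hb]
            rw [← this]; exact hsmmem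
          have hxpos : 0 < x sm.1 := (hR sm hsmmem).1 hb
          have hxval : x sm.1 = lam := by
            rw [← hsmeq, abs_of_pos hxpos]
          rw [hxval, hvec1 sm.1 hmem]
          ring
        · have hmem : (sm.1, false) ∈ R.steps := by
            have : sm = (sm.1, false) := by rw [← hb]
            rw [← this]; exact hsmmem
          have hxneg : x sm.1 < 0 := (hR sm hsmmem).2 hb
          have hxval : x sm.1 = -lam := by
            rw [← hsmeq, abs_of_neg hxneg]; ring
          rw [hxval, hvec2 sm.1 hmem]
          ring
      have hxm : x sm.1 ≠ 0 := hsignstep sm hsmmem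
      -- support shrinks
      have hsub : (Finset.univ.filter fun e => y e ≠ 0) ⊆
          (Finset.univ.filter fun e => x e ≠ 0).erase sm.1 := by
        intro e he
        rw [Finset.mem_filter] at he
        rw [Finset.mem_erase, Finset.mem_filter]
        refine ⟨?_, Finset.mem_univ e, ?_⟩
        · intro heq
          rw [heq] at he
          exact he.2 hym
        · intro hxe
          exact he.2 (hy0 e hxe)
      have hcard' : (Finset.univ.filter fun e => y e ≠ 0).card ≤ N := by
        have h1 := Finset.card_le_card hsub
        have h2 : sm.1 ∈ Finset.univ.filter fun e => x e ≠ 0 :=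
          Finset.mem_filter.mpr ⟨Finset.mem_univ _, hxm⟩
        rw [Finset.card_erase_of_mem h2] at h1
        omega
      have hyhull := ih y hyflow hcard'
      have hxeq : x = lam • R.vec + (1 - lam) • y := by
        funext e
        show x e = lam * R.vec e + (1 - lam) * ((1 - lam)⁻¹ * (x e - lam * R.vec e))
        field_simp
        ring
      have hvmem : R.vec ∈ convexHull ℝ { y | ∃ R : LGraph.Route G, y = R.vec } := by
        apply subset_convexHull
        exact ⟨R, rfl⟩
      rw [hxeq]
      exact (convex_convexHull ℝ _) hvmem hyhull (le_of_lt hlam0) (by linarith) (by ring)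

end FPAux



open FP in
/-- If `G` is acyclic, then `F_G` is the convex hull of the signed
characteristic vectors of the routes of `G`. -/
theorem stmt1 (n : ℕ) (hn : 2 ≤ n) (G : LGraph) (hsrc : G.src = 1) (hsnk : G.snk = n)
    (hwf : G.WF n) (hconn : G.Connected n) (hacyc : G.Acyclic)
    (hroutes : ∀ e : Fin G.m, ∃ (R : LGraph.Route G) (c : Bool), (e, c) ∈ R.steps)
    (hends : ∀ e : Fin G.m,
      (G.tail e = 1 ∨ G.head e = 1 ∨ G.tail e = n ∨ G.head e = n) → G.etype e = .forward) :
    G.flowSet = convexHull ℝ { x | ∃ R : LGraph.Route G, x = R.vec } := by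
  apply Set.Subset.antisymm
  · intro x hx
    exact FPAux.flow_decomp G hn hsrc hsnk hwf hacyc
      ((Finset.univ.filter fun e => x e ≠ 0).card) x hx le_rfl
  · refine convexHull_min ?_ (FPAux.convex_flowSet G)
    rintro y ⟨R, rfl⟩
    exact FPAux.vec_mem_flowSet G hwf R
end

section
/- Suppose G is acyclic. If R_u, R_v, R_w are routes of G and μ_1, μ_2 ∈ ℝ satisfy x_{R_u} = μ_1·x_{R_v} + μ_2·x_{R_w}, then x_{R_u} = x_{R_v} or x_{R_u} = x_{R_w}. In particular, no three pairwise distinct signed characteristic vectors of routes of G are collinear. -/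
namespace FP

namespace LGraph

variable {G : LGraph}

/-- Indicator coefficient of an edge at a vertex. -/
noncomputable def dcoef (G : LGraph) (v : ℕ) (e : Fin G.m) : ℝ :=
  (if G.tail e = v then 1 else 0) - (if G.head e = v then 1 else 0)

lemma netflow_eq_sum_mul (x : Fin G.m → ℝ) (v : ℕ) :
    G.netflow x v = ∑ e : Fin G.m, x e * G.dcoef v e := by
  unfold netflow dcoef
  refine Finset.sum_congr rfl fun e _ => ?_
  split_ifs <;> ring

/-- Netflow is linear. -/
lemma netflow_comb (a b : ℝ) (x y : Fin G.m → ℝ) (v : ℕ) :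
    G.netflow (a • x + b • y) v = a * G.netflow x v + b * G.netflow y v := by
  simp only [netflow_eq_sum_mul, Pi.add_apply, Pi.smul_apply, smul_eq_mul,
    Finset.mul_sum, ← Finset.sum_add_distrib]
  refine Finset.sum_congr rfl fun e _ => by ring

noncomputable def stepflow (G : LGraph) (v : ℕ) (s : Fin G.m × Bool) : ℝ :=
  (if G.sv s = v then 1 else 0) - (if G.ev s = v then 1 else 0)

noncomputable def vecL (G : LGraph) (L : List (Fin G.m × Bool)) : Fin G.m → ℝ := fun e =>
  if (e, true) ∈ L then 1 else if (e, false) ∈ L then -1 else 0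

lemma stepflow_eq (v : ℕ) (s : Fin G.m × Bool) :
    G.stepflow v s = (if s.2 then (1:ℝ) else -1) * G.dcoef v s.1 := by
  rcases s with ⟨e, b⟩
  cases b <;> simp [stepflow, sv, ev, dcoef] <;> ring

lemma sum_vecL (v : ℕ) : ∀ L : List (Fin G.m × Bool), (L.map Prod.fst).Nodup →
    (∑ e : Fin G.m, vecL G L e * G.dcoef v e) = (L.map (G.stepflow v)).sum := by
  intro L
  induction L with
  | nil => simp [vecL]
  | cons s t ih =>
    intro hnd
    simp only [List.map_cons, List.nodup_cons] at hnd
    have hvec : ∀ e, vecL G (s :: t) e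
        = vecL G t e + (if e = s.1 then (if s.2 then (1:ℝ) else -1) else 0) := by
      intro e
      by_cases he : e = s.1
      · subst he
        have h1 : (s.1, true) ∉ t := fun h => hnd.1 (List.mem_map.2 ⟨_, h, rfl⟩)
        have h2 : (s.1, false) ∉ t := fun h => hnd.1 (List.mem_map.2 ⟨_, h, rfl⟩)
        rcases s with ⟨e, b⟩
        cases b <;> simp [vecL, h1, h2]
      · have h1 : ((e, true) = s) = False := by
          simp only [eq_iff_iff, iff_false]; intro h; exact he (by rw [← h])
        have h2 : ((e, false) = s) = False := by
          simp only [eq_iff_iff, iff_false]; intro h; exact he (by rw [← h])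
        simp [vecL, List.mem_cons, h1, h2, he]
    calc (∑ e : Fin G.m, vecL G (s :: t) e * G.dcoef v e)
        = ∑ e : Fin G.m, (vecL G t e * G.dcoef v e
            + (if e = s.1 then (if s.2 then (1:ℝ) else -1) * G.dcoef v e else 0)) := by
          refine Finset.sum_congr rfl fun e _ => ?_
          rw [hvec e]; split_ifs <;> ring
      _ = (t.map (G.stepflow v)).sum + (if s.2 then (1:ℝ) else -1) * G.dcoef v s.1 := by
          rw [Finset.sum_add_distrib, ih hnd.2, Finset.sum_ite_eq' Finset.univ s.1]
          simp
      _ = ((s :: t).map (G.stepflow v)).sum := by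
          rw [List.map_cons, List.sum_cons, stepflow_eq, add_comm]

lemma chainsum (v : ℕ) : ∀ (L : List (Fin G.m × Bool)) (h : L ≠ []),
    L.Chain' (fun s t => G.ev s = G.sv t) →
    (L.map (G.stepflow v)).sum
      = (if G.sv (L.head h) = v then (1:ℝ) else 0)
        - (if G.ev (L.getLast h) = v then 1 else 0) := by
  intro L
  induction L with
  | nil => intro h; exact absurd rfl h
  | cons s t ih =>
    intro _ hch
    cases t with
    | nil => simp [stepflow]; rfl
    | cons s' t' =>
      simp only [List.Chain', List.isChain_cons_cons] at hch
      have := ih (by simp) hch.2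
      rw [List.map_cons, List.sum_cons, this, List.getLast_cons_cons]
      simp only [List.head_cons, stepflow, hch.1]
      exact sub_add_sub_cancel _ _ _

lemma netflow_route (R : Route G) (v : ℕ) :
    G.netflow R.vec v = (if v = G.src then (1:ℝ) else 0) - (if v = G.snk then 1 else 0) := by
  have hvec : R.vec = vecL G R.steps := rfl
  rw [netflow_eq_sum_mul, hvec, sum_vecL v R.steps R.nodup,
    chainsum v R.steps R.ne R.chain, R.first, R.last]
  simp only [eq_comm]

end LGraph

namespace LGraph

variable {G : LGraph} {n : ℕ}

lemma edge_mem (e : Fin G.m) : G.edges.get e ∈ G.edges := by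
  have := List.get_mem G.edges e
  simpa using this

lemma tail_lt_head (hwf : G.WF n) (e : Fin G.m) : G.tail e < G.head e :=
  (hwf _ (edge_mem e)).2.1

lemma tail_mem (hwf : G.WF n) (e : Fin G.m) : 1 ≤ G.tail e ∧ G.tail e ≤ n := by
  have h := hwf _ (edge_mem e)
  exact ⟨h.1, le_trans (le_of_lt h.2.1) h.2.2⟩

lemma head_mem (hwf : G.WF n) (e : Fin G.m) : 1 ≤ G.head e ∧ G.head e ≤ n := by
  have h := hwf _ (edge_mem e)
  exact ⟨le_trans h.1 (le_of_lt h.2.1), h.2.2⟩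

/-- A vertex has positive outflow w.r.t. `y`. -/
abbrev OutS (G : LGraph) (y : Fin G.m → ℝ) (v : ℕ) : Prop :=
  ∃ e : Fin G.m, (G.tail e = v ∧ 0 < y e) ∨ (G.head e = v ∧ y e < 0)

/-- One step along the direction of positive flow. -/
abbrev FRel (G : LGraph) (y : Fin G.m → ℝ) (a b : ℕ) : Prop :=
  ∃ e : Fin G.m, (G.tail e = a ∧ G.head e = b ∧ 0 < y e) ∨
                 (G.head e = a ∧ G.tail e = b ∧ y e < 0)

lemma inflow_outflow (hwf : G.WF n) (y : Fin G.m → ℝ) (hnet : ∀ v, G.netflow y v = 0)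
    (v : ℕ) (hin : ∃ e : Fin G.m, (G.head e = v ∧ 0 < y e) ∨ (G.tail e = v ∧ y e < 0)) :
    G.OutS y v := by
  by_contra hP
  rw [OutS] at hP
  push_neg at hP
  obtain ⟨e0, he0⟩ := hin
  have hlt : G.netflow y v < 0 := by
    rw [netflow]
    have hzero : ∑ e : Fin G.m, (0:ℝ) = 0 := by simp
    rw [← hzero]
    apply Finset.sum_lt_sum
    · intro e _
      obtain ⟨h1, h2⟩ := hP e
      by_cases ht : G.tail e = v <;> by_cases hh : G.head e = v
      · exact absurd (ht.trans hh.symm) (ne_of_lt (tail_lt_head hwf e))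
      · simp only [if_pos ht, if_neg hh]
        have := h1 ht
        linarith
      · simp only [if_neg ht, if_pos hh]
        have := h2 hh
        linarith
      · simp [ht, hh]
    · refine ⟨e0, Finset.mem_univ _, ?_⟩
      rcases he0 with ⟨hh, hy⟩ | ⟨ht, hy⟩
      · have ht : G.tail e0 ≠ v := fun hc =>
          (ne_of_lt (tail_lt_head hwf e0)) (hc.trans hh.symm)
        simp only [if_neg ht, if_pos hh]
        linarith
      · have hh : G.head e0 ≠ v := fun hc =>
          (ne_of_lt (tail_lt_head hwf e0)) (ht.trans hc.symm)
        simp only [if_pos ht, if_neg hh]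
        linarith
  rw [hnet v] at hlt
  exact absurd hlt (lt_irrefl 0)

lemma FRel_outS (hwf : G.WF n) (y : Fin G.m → ℝ) (hnet : ∀ v, G.netflow y v = 0)
    {a b : ℕ} (h : G.FRel y a b) : G.OutS y b := by
  obtain ⟨e, he⟩ := h
  apply inflow_outflow hwf y hnet
  rcases he with ⟨_, hh, hy⟩ | ⟨_, ht, hy⟩
  · exact ⟨e, Or.inl ⟨hh, hy⟩⟩
  · exact ⟨e, Or.inr ⟨ht, hy⟩⟩

lemma outS_step (y : Fin G.m → ℝ) {a : ℕ} (h : G.OutS y a) : ∃ b, G.FRel y a b := by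
  obtain ⟨e, he⟩ := h
  rcases he with ⟨ht, hy⟩ | ⟨hh, hy⟩
  · exact ⟨G.head e, e, Or.inl ⟨ht, rfl, hy⟩⟩
  · exact ⟨G.tail e, e, Or.inr ⟨hh, rfl, hy⟩⟩

lemma outS_mem (hwf : G.WF n) (y : Fin G.m → ℝ) {a : ℕ} (h : G.OutS y a) :
    1 ≤ a ∧ a ≤ n := by
  obtain ⟨e, he⟩ := h
  rcases he with ⟨ht, _⟩ | ⟨hh, _⟩
  · exact ht ▸ tail_mem hwf e
  · exact hh ▸ head_mem hwf e

lemma FRel_dstep (y : Fin G.m → ℝ)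
    (hdir : ∀ e, (0 < y e → G.etype e ≠ .backward) ∧ (y e < 0 → G.etype e ≠ .forward))
    {a b : ℕ} (h : G.FRel y a b) : G.DStep a b := by
  obtain ⟨e, he⟩ := h
  rcases he with ⟨ht, hh, hy⟩ | ⟨hh, ht, hy⟩
  · exact ⟨e, Or.inl ⟨ht, hh, (hdir e).1 hy⟩⟩
  · exact ⟨e, Or.inr ⟨hh, ht, (hdir e).2 hy⟩⟩

lemma no_circulation (hwf : G.WF n) (hacyc : G.Acyclic)
    (y : Fin G.m → ℝ) (hnet : ∀ v, G.netflow y v = 0)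
    (hdir : ∀ e, (0 < y e → G.etype e ≠ .backward) ∧ (y e < 0 → G.etype e ≠ .forward)) :
    y = 0 := by
  by_contra hy
  obtain ⟨e0, he0⟩ : ∃ e, y e ≠ 0 := by
    by_contra hc; push_neg at hc; exact hy (funext hc)
  have hstart : ∃ v, G.OutS y v := by
    rcases lt_or_gt_of_ne he0 with h | h
    · exact ⟨G.head e0, e0, Or.inr ⟨rfl, h⟩⟩
    · exact ⟨G.tail e0, e0, Or.inl ⟨rfl, h⟩⟩
  obtain ⟨v0, hv0⟩ := hstart
  -- build an infinite walk
  have next : ∀ v : {v // G.OutS y v}, {w // G.OutS y w ∧ G.FRel y v.1 w} := by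
    intro ⟨v, hv⟩
    exact ⟨Classical.choose (outS_step y hv),
      FRel_outS hwf y hnet (Classical.choose_spec (outS_step y hv)),
      Classical.choose_spec (outS_step y hv)⟩
  let g : ℕ → {v // G.OutS y v} := fun k => Nat.rec ⟨v0, hv0⟩ (fun _ p => ⟨(next p).1, (next p).2.1⟩) k
  have hgstep : ∀ k, G.FRel y (g k).1 (g (k+1)).1 := fun k => (next (g k)).2.2
  have htrans : ∀ d k, Relation.TransGen (G.FRel y) (g k).1 (g (k+d+1)).1 := by
    intro d
    induction d with
    | zero => exact fun k => Relation.TransGen.single (hgstep k)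
    | succ d ih => exact fun k => Relation.TransGen.tail (ih k) (hgstep (k+d+1))
  have hmaps : ∀ k ∈ Finset.range (n+1), (g k).1 ∈ Finset.Icc 1 n := by
    intro k _
    have := outS_mem hwf y (g k).2
    exact Finset.mem_Icc.2 this
  have hcard : (Finset.Icc 1 n).card < (Finset.range (n+1)).card := by
    simp [Nat.card_Icc]
  obtain ⟨i, hi, j, hj, hne, heq⟩ :=
    Finset.exists_ne_map_eq_of_card_lt_of_maps_to hcard hmaps
  rcases lt_or_gt_of_ne hne with hij | hij
  · obtain ⟨d, rfl⟩ : ∃ d, j = i + d + 1 := ⟨j - i - 1, by omega⟩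
    have := htrans d i
    rw [heq] at this
    exact hacyc _ (Relation.TransGen.mono (r := G.FRel y) (p := G.DStep) (by intro a b h; exact FRel_dstep y hdir h) _ _ this)
  · obtain ⟨d, rfl⟩ : ∃ d, i = j + d + 1 := ⟨i - j - 1, by omega⟩
    have := htrans d j
    rw [← heq] at this
    exact hacyc _ (Relation.TransGen.mono (r := G.FRel y) (p := G.DStep) (by intro a b h; exact FRel_dstep y hdir h) _ _ this)

end LGraph

namespace LGraph

variable {G : LGraph}

lemma vec_cases (R : Route G) (e : Fin G.m) :
    R.vec e = 0 ∨ R.vec e = 1 ∨ R.vec e = -1 := by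
  unfold Route.vec
  split_ifs <;> simp

lemma vec_eq_one (R : Route G) {e : Fin G.m} (h : R.vec e = 1) : (e, true) ∈ R.steps := by
  unfold Route.vec at h
  split_ifs at h with h1 h2
  · exact h1
  · norm_num at h
  · norm_num at h

lemma vec_eq_neg_one (R : Route G) {e : Fin G.m} (h : R.vec e = -1) :
    (e, false) ∈ R.steps := by
  unfold Route.vec at h
  split_ifs at h with h1 h2
  · norm_num at h
  · exact h2
  · norm_num at h

end LGraph

/-- Pointwise midpoint lemma: if `m` is a strict convex combination of `a` and `b`
and all three lie in `{0, 1, -1}`, then `a = b` or `{a,b} = {1,-1}`. -/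
lemma mid_lemma (a b mm s1 s2 : ℝ)
    (ha : a = 0 ∨ a = 1 ∨ a = -1) (hb : b = 0 ∨ b = 1 ∨ b = -1)
    (hm : mm = 0 ∨ mm = 1 ∨ mm = -1)
    (hs1 : 0 < s1) (hs2 : 0 < s2) (heq : (s1 + s2) * mm = s1 * a + s2 * b) :
    a = b ∨ (a = 1 ∧ b = -1) ∨ (a = -1 ∧ b = 1) := by
  rcases ha with rfl | rfl | rfl <;> rcases hb with rfl | rfl | rfl <;>
    rcases hm with h | h | h <;> rw [h] at heq <;>
    first
      | (left; rfl)
      | (right; left; exact ⟨rfl, rfl⟩)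
      | (right; right; exact ⟨rfl, rfl⟩)
      | (exfalso; nlinarith)

namespace LGraph

variable {G : LGraph} {n : ℕ}

lemma netflow_sub (x y : Fin G.m → ℝ) (v : ℕ) :
    G.netflow (x - y) v = G.netflow x v - G.netflow y v := by
  have hx : x - y = (1:ℝ) • x + (-1:ℝ) • y := by funext i; simp [sub_eq_add_neg]
  rw [hx, netflow_comb]; ring

/-- Two routes whose signed characteristic vectors differ only in coordinates where
they take opposite values `±1` must coincide, in an acyclic graph. -/
lemma routes_opposite (hwf : G.WF n) (hacyc : G.Acyclic) (A B : Route G)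
    (hval : ∀ e, A.vec e = B.vec e ∨ (A.vec e = 1 ∧ B.vec e = -1) ∨
      (A.vec e = -1 ∧ B.vec e = 1)) :
    A.vec = B.vec := by
  set y : Fin G.m → ℝ := A.vec - B.vec with hy
  have hnet : ∀ v, G.netflow y v = 0 := by
    intro v
    rw [hy, netflow_sub, netflow_route, netflow_route, sub_self]
  have hdir : ∀ e, (0 < y e → G.etype e ≠ .backward) ∧ (y e < 0 → G.etype e ≠ .forward) := by
    intro e
    rcases hval e with heq | ⟨hA, hB⟩ | ⟨hA, hB⟩
    · have h0 : y e = 0 := by simp [hy, heq]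
      exact ⟨fun h => absurd (h0 ▸ h) (lt_irrefl 0),
             fun h => absurd (h0 ▸ h) (lt_irrefl 0)⟩
    · have h0 : y e = 2 := by simp [hy, hA, hB]; norm_num
      refine ⟨fun _ => ?_, fun h => absurd (h0 ▸ h) (by norm_num)⟩
      exact (A.dir _ (vec_eq_one A hA)).1 rfl
    · have h0 : y e = -2 := by simp [hy, hA, hB]; norm_num
      refine ⟨fun h => absurd (h0 ▸ h) (by norm_num), fun _ => ?_⟩
      exact (A.dir _ (vec_eq_neg_one A hA)).2 rfl
  have := no_circulation hwf hacyc y hnet hdir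
  exact sub_eq_zero.1 this

end LGraph


end FP

open FP in
theorem stmt2' (n : ℕ) (hn : 2 ≤ n) (G : LGraph) (hsrc : G.src = 1) (hsnk : G.snk = n)
    (hwf : G.WF n) (hacyc : G.Acyclic) :
    (∀ (Ru Rv Rw : LGraph.Route G) (μ₁ μ₂ : ℝ),
        Ru.vec = μ₁ • Rv.vec + μ₂ • Rw.vec → Ru.vec = Rv.vec ∨ Ru.vec = Rw.vec) ∧
    (∀ Ru Rv Rw : LGraph.Route G,
        Ru.vec ≠ Rv.vec → Ru.vec ≠ Rw.vec → Rv.vec ≠ Rw.vec →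
        ¬ Collinear ℝ ({Ru.vec, Rv.vec, Rw.vec} : Set (Fin G.m → ℝ))) := by
  have hss : G.src ≠ G.snk := by rw [hsrc, hsnk]; omega
  have part1 : ∀ (Ru Rv Rw : LGraph.Route G) (μ₁ μ₂ : ℝ),
      Ru.vec = μ₁ • Rv.vec + μ₂ • Rw.vec → Ru.vec = Rv.vec ∨ Ru.vec = Rw.vec := by
    intro Ru Rv Rw μ₁ μ₂ h
    have hcomp : ∀ e, Ru.vec e = μ₁ * Rv.vec e + μ₂ * Rw.vec e := by
      intro e
      have := congrFun h e
      simpa using this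
    have hsum : μ₁ + μ₂ = 1 := by
      have h1 := LGraph.netflow_route Ru G.src
      have h2 := LGraph.netflow_route Rv G.src
      have h3 := LGraph.netflow_route Rw G.src
      have h4 := LGraph.netflow_comb μ₁ μ₂ Rv.vec Rw.vec G.src
      rw [← h, h1] at h4
      rw [h2] at h4
      rw [h3] at h4
      simp only [if_pos rfl, if_neg hss] at h4
      norm_num at h4
      linarith
    have hμ₁ : μ₁ = 1 - μ₂ := by linarith
    have hcomp' : ∀ e, Ru.vec e = (1 - μ₂) * Rv.vec e + μ₂ * Rw.vec e := by
      intro e; rw [← hμ₁]; exact hcomp e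
    by_contra hc
    push_neg at hc
    obtain ⟨hne1, hne2⟩ := hc
    rcases lt_trichotomy μ₂ 0 with hneg | hz | hpos
    · -- Rv is the midpoint of Ru and Rw
      apply hne2
      apply LGraph.routes_opposite hwf hacyc Ru Rw
      intro e
      exact mid_lemma _ _ _ 1 (-μ₂) (LGraph.vec_cases Ru e) (LGraph.vec_cases Rw e)
        (LGraph.vec_cases Rv e) one_pos (by linarith)
        (by linarith [hcomp' e])
    · -- μ₂ = 0
      apply hne1
      funext e
      have := hcomp e
      rw [hz] at this
      have hμ1 : μ₁ = 1 := by linarith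
      rw [hμ1] at this
      simpa using this
    · by_cases hone : μ₂ = 1
      · apply hne2
        funext e
        have := hcomp e
        have hμ1 : μ₁ = 0 := by rw [hone] at hsum; linarith
        rw [hμ1, hone] at this
        simpa using this
      · rcases lt_trichotomy μ₂ 1 with hlt | heq | hgt
        · -- Ru is midpoint of Rv and Rw
          have hRvw : Rv.vec = Rw.vec := by
            apply LGraph.routes_opposite hwf hacyc Rv Rw
            intro e
            exact mid_lemma _ _ _ (1 - μ₂) μ₂ (LGraph.vec_cases Rv e) (LGraph.vec_cases Rw e)
              (LGraph.vec_cases Ru e) (by linarith) hpos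
              (by linarith [hcomp' e])
          apply hne1
          funext e
          have h1 := hcomp' e
          have h2 := congrFun hRvw e
          rw [← h2] at h1
          linarith [h1]
        · exact absurd heq hone
        · -- Rw is midpoint of Ru and Rv
          apply hne1
          apply LGraph.routes_opposite hwf hacyc Ru Rv
          intro e
          exact mid_lemma _ _ _ 1 (μ₂ - 1) (LGraph.vec_cases Ru e) (LGraph.vec_cases Rv e)
            (LGraph.vec_cases Rw e) one_pos (by linarith)
            (by linarith [hcomp' e])
  refine ⟨part1, ?_⟩
  intro Ru Rv Rw h1 h2 h3 hcol
  rw [collinear_iff_exists_forall_eq_smul_vadd] at hcol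
  obtain ⟨p₀, v, hv⟩ := hcol
  obtain ⟨ru, hru⟩ := hv Ru.vec (by simp)
  obtain ⟨rv, hrv⟩ := hv Rv.vec (by simp)
  obtain ⟨rw_, hrw⟩ := hv Rw.vec (by simp)
  have hrvw : rv ≠ rw_ := by
    intro hc
    apply h3
    rw [hrv, hrw, hc]
  have hden : rw_ - rv ≠ 0 := fun hc => hrvw (by linarith)
  obtain ⟨μ₂, hμ⟩ : ∃ t : ℝ, (1 - t) * rv + t * rw_ = ru :=
    ⟨(ru - rv) / (rw_ - rv), by field_simp; ring⟩
  have hcomb : Ru.vec = (1 - μ₂) • Rv.vec + μ₂ • Rw.vec := by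
    funext i
    have hu : Ru.vec i = ru * v i + p₀ i := by rw [hru]; simp
    have hvv : Rv.vec i = rv * v i + p₀ i := by rw [hrv]; simp
    have hw : Rw.vec i = rw_ * v i + p₀ i := by rw [hrw]; simp
    simp only [Pi.add_apply, Pi.smul_apply, smul_eq_mul, hu, hvv, hw]
    linear_combination (-(v i)) * hμ
  rcases part1 Ru Rv Rw (1 - μ₂) μ₂ hcomb with hEq | hEq
  · exact h1 hEq
  · exact h2 hEq


open FP in
/-- If `G` is acyclic and `x_{R_u} = μ₁ x_{R_v} + μ₂ x_{R_w}` for routes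
`R_u, R_v, R_w`, then `x_{R_u} = x_{R_v}` or `x_{R_u} = x_{R_w}`.  In particular no three
pairwise distinct signed characteristic vectors of routes are collinear. -/
theorem stmt2 (n : ℕ) (hn : 2 ≤ n) (G : LGraph) (hsrc : G.src = 1) (hsnk : G.snk = n)
    (hwf : G.WF n) (hconn : G.Connected n) (hacyc : G.Acyclic)
    (hroutes : ∀ e : Fin G.m, ∃ (R : LGraph.Route G) (c : Bool), (e, c) ∈ R.steps)
    (hends : ∀ e : Fin G.m,
      (G.tail e = 1 ∨ G.head e = 1 ∨ G.tail e = n ∨ G.head e = n) → G.etype e = .forward) :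
    (∀ (Ru Rv Rw : LGraph.Route G) (μ₁ μ₂ : ℝ),
        Ru.vec = μ₁ • Rv.vec + μ₂ • Rw.vec → Ru.vec = Rv.vec ∨ Ru.vec = Rw.vec) ∧
    (∀ Ru Rv Rw : LGraph.Route G,
        Ru.vec ≠ Rv.vec → Ru.vec ≠ Rw.vec → Rv.vec ≠ Rw.vec →
        ¬ Collinear ℝ ({Ru.vec, Rv.vec, Rw.vec} : Set (Fin G.m → ℝ))) := by
  exact stmt2' n hn G hsrc hsnk hwf hacyc
end
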